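/- Let H ∈ (0,1), H ≠ 1/2, m ≥ 0 an integer, K > 0 with 2^{-2m} ≤ K, and write t_x = x 2^{-2m} with the convention 0^{H−1/2} = 0. Then max over integers k with 1 ≤ k ≤ K 2^{2m} of Σ_{r=0}^{k} | (t_k − t_{r−1})^{H−1/2} − (t_k − t_r)^{H−1/2} | is at most 3 · 2^{−2m(H−1/2)} if 0 < H < 1/2, and at most (2K)^{H−1/2} if 1/2 < H < 1. -/
import Mathlib


/-- Let `H ∈ (0,1)`, `H ≠ 1/2`, `m ≥ 0`, `K > 0` with `2^{-2m} ≤ K`, and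
`t_x = x 2^{-2m}`, with the convention `0^{H−1/2} = 0` (automatic for `Real.rpow` since
`H − 1/2 ≠ 0`).  Then the maximum over integers `k` with `1 ≤ k ≤ K 2^{2m}` of
`Σ_{r=0}^{k} | (t_k − t_{r−1})^{H−1/2} − (t_k − t_r)^{H−1/2} |` is at most
`3 · 2^{−2m(H−1/2)}` if `0 < H < 1/2`, and at most `(2K)^{H−1/2}` if `1/2 < H < 1`. -/
theorem statement15 (H : ℝ) (hH0 : 0 < H) (hH1 : H < 1) (hHhalf : H ≠ 1/2)
    (m : ℕ) (K : ℝ) (hK : 0 < K) (hΔK : (2:ℝ)^(-(2*(m:ℤ))) ≤ K) :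
    (H < 1/2 → ∀ k : ℕ, 1 ≤ k → (k : ℝ) ≤ K * 2^(2*m) →
      ∑ r ∈ Finset.range (k+1),
        |(((k : ℝ) - r + 1) * (2:ℝ)^(-(2*(m:ℤ)))) ^ (H - 1/2)
          - (((k : ℝ) - r) * (2:ℝ)^(-(2*(m:ℤ)))) ^ (H - 1/2)|
        ≤ 3 * (2:ℝ) ^ (-(2*(m:ℝ)) * (H - 1/2))) ∧
    (1/2 < H → ∀ k : ℕ, 1 ≤ k → (k : ℝ) ≤ K * 2^(2*m) →
      ∑ r ∈ Finset.range (k+1),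
        |(((k : ℝ) - r + 1) * (2:ℝ)^(-(2*(m:ℤ)))) ^ (H - 1/2)
          - (((k : ℝ) - r) * (2:ℝ)^(-(2*(m:ℤ)))) ^ (H - 1/2)|
        ≤ (2*K) ^ (H - 1/2)) := by
  have haneq : H - 1/2 ≠ 0 := sub_ne_zero.mpr hHhalf
  set a : ℝ := H - 1/2 with ha
  set Δ : ℝ := (2:ℝ)^(-(2*(m:ℤ))) with hΔdef
  have hΔpos : 0 < Δ := by positivity
  have hΔa : (0:ℝ) < Δ ^ a := Real.rpow_pos_of_pos hΔpos a
  have hsplit : ∀ k : ℕ, ∑ r ∈ Finset.range (k+1),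
      |(((k:ℝ) - r + 1) * Δ)^a - (((k:ℝ) - r) * Δ)^a|
      = Δ^a * ∑ r ∈ Finset.range (k+1), |((k:ℝ) - r + 1)^a - ((k:ℝ) - r)^a| := by
    intro k
    rw [Finset.mul_sum]
    refine Finset.sum_congr rfl ?_
    intro r hr
    have hr' : (r:ℝ) ≤ (k:ℝ) := by
      exact_mod_cast Nat.lt_succ_iff.mp (Finset.mem_range.mp hr)
    rw [Real.mul_rpow (by linarith) hΔpos.le, Real.mul_rpow (by linarith) hΔpos.le,
      ← sub_mul, abs_mul, abs_of_pos hΔa, mul_comm]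
  constructor
  · intro hH k hk1 hk2
    have haneg : a < 0 := by rw [ha]; linarith
    have hinner : ∑ r ∈ Finset.range (k+1), |((k:ℝ) - r + 1)^a - ((k:ℝ) - r)^a| ≤ 2 := by
      rw [Finset.sum_range_succ]
      have h1 : ((k:ℝ) - k + 1) = 1 := by ring
      have h0 : ((k:ℝ) - k) = 0 := by ring
      rw [h1, h0, Real.one_rpow, Real.zero_rpow haneq]
      have htail : ∑ r ∈ Finset.range k, |((k:ℝ) - r + 1)^a - ((k:ℝ) - r)^a| ≤ 1 := by
        have heq : ∀ r ∈ Finset.range k,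
            |((k:ℝ) - r + 1)^a - ((k:ℝ) - r)^a|
            = (fun r : ℕ => -(((k:ℝ) - r + 1)^a)) r
              - (fun r : ℕ => -(((k:ℝ) - r + 1)^a)) (r+1) := by
          intro r hr
          have hrk : (r:ℝ) + 1 ≤ (k:ℝ) := by
            exact_mod_cast Finset.mem_range.mp hr
          simp only
          have hcast : ((k:ℝ) - ((r:ℕ)+1:ℕ) + 1) = (k:ℝ) - r := by push_cast; ring
          rw [hcast]
          have hle : ((k:ℝ) - r + 1)^a ≤ ((k:ℝ) - r)^a :=
            Real.rpow_le_rpow_of_nonpos (by linarith) (by linarith) haneg.le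
          rw [abs_of_nonpos (by linarith)]
          ring
        rw [Finset.sum_congr rfl heq, Finset.sum_range_sub']
        have e0 : ((k:ℝ) - ((0:ℕ):ℝ) + 1) = (k:ℝ)+1 := by push_cast; ring
        have ek : ((k:ℝ) - ((k:ℕ):ℝ) + 1) = 1 := by push_cast; ring
        rw [e0, ek, Real.one_rpow]
        have hp : (0:ℝ) < ((k:ℝ)+1)^a := Real.rpow_pos_of_pos (by positivity) a
        linarith
      rw [abs_of_nonneg (by norm_num : (0:ℝ) ≤ 1 - 0)]
      linarith
    have hrhs : (2:ℝ) ^ (-(2*(m:ℝ)) * a) = Δ ^ a := by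
      rw [hΔdef, ← Real.rpow_intCast 2 (-(2*(m:ℤ))), ← Real.rpow_mul (by norm_num)]
      congr 1
      push_cast
      ring
    rw [hsplit k, hrhs]
    nlinarith [mul_le_mul_of_nonneg_left hinner hΔa.le]
  · intro hH k hk1 hk2
    have hapos : 0 < a := by rw [ha]; linarith
    rw [hsplit k]
    have hinner : ∑ r ∈ Finset.range (k+1), |((k:ℝ) - r + 1)^a - ((k:ℝ) - r)^a|
        = ((k:ℝ)+1)^a := by
      have heq : ∀ r ∈ Finset.range (k+1),
          |((k:ℝ) - r + 1)^a - ((k:ℝ) - r)^a|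
          = (fun r : ℕ => (((k:ℝ) - r + 1)^a)) r
            - (fun r : ℕ => (((k:ℝ) - r + 1)^a)) (r+1) := by
        intro r hr
        have hrk : (r:ℝ) ≤ (k:ℝ) := by
          exact_mod_cast Nat.lt_succ_iff.mp (Finset.mem_range.mp hr)
        simp only
        have hcast : ((k:ℝ) - ((r:ℕ)+1:ℕ) + 1) = (k:ℝ) - r := by push_cast; ring
        rw [hcast]
        have hle : ((k:ℝ) - r)^a ≤ ((k:ℝ) - r + 1)^a :=
          Real.rpow_le_rpow (by linarith) (by linarith) hapos.le
        rw [abs_of_nonneg (by linarith)]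
      rw [Finset.sum_congr rfl heq, Finset.sum_range_sub']
      have e0 : ((k:ℝ) - ((0:ℕ):ℝ) + 1) = (k:ℝ)+1 := by push_cast; ring
      have ek : ((k:ℝ) - ((k+1:ℕ):ℝ) + 1) = 0 := by push_cast; ring
      rw [e0, ek, Real.zero_rpow haneq, sub_zero]
    rw [hinner]
    have hmul : Δ^a * ((k:ℝ)+1)^a = (((k:ℝ)+1)*Δ)^a := by
      rw [Real.mul_rpow (by positivity) hΔpos.le, mul_comm]
    have hP : Δ * (2:ℝ)^(2*m) = 1 := by
      rw [hΔdef, ← zpow_natCast (2:ℝ) (2*m), ← zpow_add₀ (two_ne_zero)]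
      simp
    have hkΔ : ((k:ℝ)+1)*Δ ≤ 2*K := by
      have h1 : (k:ℝ)*Δ ≤ K := by
        calc (k:ℝ)*Δ ≤ (K * 2^(2*m))*Δ := by nlinarith [hΔpos]
          _ = K := by rw [mul_assoc, mul_comm ((2:ℝ)^(2*m)) Δ, hP, mul_one]
      nlinarith [hΔK]
    rw [hmul]
    exact Real.rpow_le_rpow (by positivity) hkΔ hapos.le
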